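/- arXiv:2401.16250 — 5 statements merged into one kernel-verified Lean document; each statement's English description precedes it below -/
import Mathlib

section
/- Let m ≥ 1 and 1 ≤ j ≤ m. The vector w ∈ ℝᵐ with components w_l = sin(jπ·l/(m+1)), l = 1,…,m, satisfies T_m w = λ_{j,m} w, where λ_{j,m} := (1 − (2/3)·sin²(jπ/(2(m+1)))) / (16·(m+1)³·sin⁴(jπ/(2(m+1)))); that is, λ_{j,m} = σ_{j,m}² is an eigenvalue of T_m with eigenvector (sin(jπ·l/(m+1)))_{l=1}^m. -/
open Real

/-- The kernel `κ₀(x,y) = min(x(1−y), y(1−x))`. -/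
noncomputable def kappa0 (x y : ℝ) : ℝ := min (x * (1 - y)) (y * (1 - x))

open intervalIntegral
noncomputable def hatf (N : ℝ) (i : ℕ) (y : ℝ) : ℝ := max 0 (1/N - |y - i/N|)

lemma kappa0_eq (x y : ℝ) : kappa0 x y = min x y - x*y := by
  unfold kappa0
  rcases le_total x y with h | h
  · rw [min_eq_left (by nlinarith), min_eq_left h]; ring
  · rw [min_eq_right (by nlinarith), min_eq_right h]; ring

lemma min_half (a b : ℝ) : min a b = (a + b - |a - b|)/2 := by
  rcases le_total a b with h | h
  · rw [min_eq_left h, abs_of_nonpos (by linarith)]; ring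
  · rw [min_eq_right h, abs_of_nonneg (by linarith)]; ring

lemma abs_sd (t h : ℝ) (hh : 0 ≤ h) : |t - h| + |t + h| - 2*|t| = 2 * max 0 (h - |t|) := by
  rcases abs_cases t with ⟨h1, h2⟩ | ⟨h1, h2⟩ <;>
  rcases abs_cases (t - h) with ⟨h3, h4⟩ | ⟨h3, h4⟩ <;>
  rcases abs_cases (t + h) with ⟨h5, h6⟩ | ⟨h5, h6⟩ <;>
  rcases max_cases 0 (h - |t|) with ⟨h7, h8⟩ | ⟨h7, h8⟩ <;>
  linarith

lemma kappa0_sd (x h y : ℝ) (hh : 0 ≤ h) :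
    kappa0 (x - h) y - 2 * kappa0 x y + kappa0 (x + h) y = -(max 0 (h - |y - x|)) := by
  rw [kappa0_eq, kappa0_eq, kappa0_eq, min_half, min_half, min_half]
  have e1 : |x - h - y| = |x - y - h| := congrArg abs (by ring)
  have e2 : |x + h - y| = |x - y + h| := congrArg abs (by ring)
  have := abs_sd (x - y) h hh
  rw [abs_sub_comm y x]
  linarith

lemma cont_kappa (x : ℝ) : Continuous (kappa0 x) := by
  unfold kappa0
  exact (continuous_const.mul (continuous_const.sub continuous_id)).min
    (continuous_id.mul continuous_const)

lemma cont_hat (N : ℝ) (i : ℕ) : Continuous (hatf N i) := by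
  unfold hatf
  exact continuous_const.max (continuous_const.sub ((continuous_id.sub continuous_const).abs))

noncomputable def Pint (N : ℝ) (i l : ℕ) : ℝ := ∫ y in (0:ℝ)..1, kappa0 (i/N) y * kappa0 (l/N) y
noncomputable def Qint (N : ℝ) (i l : ℕ) : ℝ := ∫ y in (0:ℝ)..1, hatf N i y * kappa0 (l/N) y
noncomputable def Rint (N : ℝ) (i l : ℕ) : ℝ := ∫ y in (0:ℝ)..1, hatf N i y * hatf N l y

lemma intg_kk (a b : ℝ) : IntervalIntegrable (fun y => kappa0 a y * kappa0 b y) MeasureTheory.volume 0 1 :=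
  ((cont_kappa a).mul (cont_kappa b)).intervalIntegrable 0 1
lemma intg_hk (N : ℝ) (i : ℕ) (b : ℝ) : IntervalIntegrable (fun y => hatf N i y * kappa0 b y) MeasureTheory.volume 0 1 :=
  ((cont_hat N i).mul (cont_kappa b)).intervalIntegrable 0 1
lemma intg_hh (N : ℝ) (i l : ℕ) : IntervalIntegrable (fun y => hatf N i y * hatf N l y) MeasureTheory.volume 0 1 :=
  ((cont_hat N i).mul (cont_hat N l)).intervalIntegrable 0 1

lemma kappa0_sd' (N : ℝ) (hN : 0 < N) (i : ℕ) (y : ℝ) :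
    kappa0 ((i:ℝ)/N) y - 2 * kappa0 (((i+1:ℕ):ℝ)/N) y + kappa0 (((i+2:ℕ):ℝ)/N) y
      = -(hatf N (i+1) y) := by
  have h := kappa0_sd (((i+1:ℕ):ℝ)/N) (1/N) y (by positivity)
  have e1 : ((i+1 : ℕ):ℝ)/N - 1/N = (i:ℝ)/N := by push_cast; field_simp; ring
  have e2 : ((i+1 : ℕ):ℝ)/N + 1/N = ((i+2:ℕ):ℝ)/N := by push_cast; field_simp; ring
  rw [e1, e2] at h
  rw [h]; rfl

lemma Pint_sd (N : ℝ) (hN : 0 < N) (i l : ℕ) :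
    Pint N i l - 2 * Pint N (i+1) l + Pint N (i+2) l = -(Qint N (i+1) l) := by
  have key : Pint N i l = 2 * Pint N (i+1) l - Pint N (i+2) l - Qint N (i+1) l := by
    unfold Pint Qint
    rw [← integral_const_mul, ← integral_sub ((intg_kk _ _).const_mul 2) (intg_kk _ _),
        ← integral_sub (((intg_kk _ _).const_mul 2).sub (intg_kk _ _)) (intg_hk _ _ _)]
    apply integral_congr
    intro y _
    have h := kappa0_sd' N hN i y
    dsimp only
    linear_combination (kappa0 ((l:ℝ)/N) y) * h
  linarith

lemma Qint_sd (N : ℝ) (hN : 0 < N) (i l : ℕ) :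
    Qint N i l - 2 * Qint N i (l+1) + Qint N i (l+2) = -(Rint N i (l+1)) := by
  have key : Qint N i l = 2 * Qint N i (l+1) - Qint N i (l+2) - Rint N i (l+1) := by
    unfold Qint Rint
    rw [← integral_const_mul, ← integral_sub ((intg_hk _ _ _).const_mul 2) (intg_hk _ _ _),
        ← integral_sub (((intg_hk _ _ _).const_mul 2).sub (intg_hk _ _ _)) (intg_hh _ _ _)]
    apply integral_congr
    intro y _
    have h := kappa0_sd' N hN l y
    dsimp only
    linear_combination (hatf N i y) * h
  linarith

lemma uIcc01 : Set.uIcc (0:ℝ) 1 = Set.Icc 0 1 := Set.uIcc_of_le zero_le_one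

lemma kappa0_bd (x y : ℝ) (hy : y ∈ Set.Icc (0:ℝ) 1) (hx : x = 0 ∨ x = 1) : kappa0 x y = 0 := by
  rcases hx with h | h <;> subst h <;> unfold kappa0
  · rw [zero_mul, min_eq_left]; nlinarith [hy.1, hy.2]
  · rw [sub_self, mul_zero, min_eq_right]; nlinarith [hy.1, hy.2]

lemma Pint_bd (N : ℝ) (i l : ℕ) (h : (i:ℝ)/N = 0 ∨ (i:ℝ)/N = 1) : Pint N i l = 0 := by
  unfold Pint
  have : (∫ y in (0:ℝ)..1, kappa0 ((i:ℝ)/N) y * kappa0 ((l:ℝ)/N) y)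
      = ∫ _ in (0:ℝ)..1, (0:ℝ) := by
    apply integral_congr
    intro y hy
    rw [uIcc01] at hy
    simp only []
    rw [kappa0_bd _ y hy h, zero_mul]
  rw [this, intervalIntegral.integral_zero]

lemma Qint_bd (N : ℝ) (i l : ℕ) (h : (l:ℝ)/N = 0 ∨ (l:ℝ)/N = 1) : Qint N i l = 0 := by
  unfold Qint
  have : (∫ y in (0:ℝ)..1, hatf N i y * kappa0 ((l:ℝ)/N) y)
      = ∫ _ in (0:ℝ)..1, (0:ℝ) := by
    apply integral_congr
    intro y hy
    rw [uIcc01] at hy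
    simp only []
    rw [kappa0_bd _ y hy h, mul_zero]
  rw [this, intervalIntegral.integral_zero]

lemma hat_far (N : ℝ) (hN : 0 < N) (i l : ℕ) (h : i + 2 ≤ l) (y : ℝ) :
    hatf N i y * hatf N l y = 0 := by
  have hil : (i:ℝ) + 2 ≤ (l:ℝ) := by exact_mod_cast h
  rcases le_total y ((i:ℝ)/N + 1/N) with hy | hy
  · have hz : hatf N l y = 0 := by
      unfold hatf
      rw [max_eq_left]
      have h1 := neg_le_abs (y - (l:ℝ)/N)
      have h2 : ((i:ℝ)+2)/N ≤ (l:ℝ)/N := by gcongr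
      have e : ((i:ℝ)+2)/N = (i:ℝ)/N + 1/N + 1/N := by ring
      linarith
    rw [hz, mul_zero]
  · have hz : hatf N i y = 0 := by
      unfold hatf
      rw [max_eq_left]
      have h1 := le_abs_self (y - (i:ℝ)/N)
      linarith
    rw [hz, zero_mul]

lemma Rint_far (N : ℝ) (hN : 0 < N) (i l : ℕ) (h : i + 2 ≤ l ∨ l + 2 ≤ i) : Rint N i l = 0 := by
  unfold Rint
  have hz : ∀ y : ℝ, hatf N i y * hatf N l y = 0 := by
    intro y
    rcases h with h | h
    · exact hat_far N hN i l h y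
    · rw [mul_comm]; exact hat_far N hN l i h y
  simp only [hz]
  exact intervalIntegral.integral_zero

lemma Rint_symm (N : ℝ) (i l : ℕ) : Rint N i l = Rint N l i := by
  unfold Rint
  apply integral_congr
  intro y _
  ring

lemma integ_deriv (F f : ℝ → ℝ) (a b : ℝ) (hd : ∀ x, HasDerivAt F (f x) x)
    (hc : Continuous f) : ∫ x in a..b, f x = F b - F a :=
  integral_eq_sub_of_hasDerivAt (fun x _ => hd x) (hc.intervalIntegrable a b)

lemma hat_eq_left (N : ℝ) (i : ℕ) (y : ℝ) (h1 : (i:ℝ)/N - 1/N ≤ y) (h2 : y ≤ (i:ℝ)/N)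
    (hN : 0 < N) : hatf N i y = y - (i:ℝ)/N + 1/N := by
  unfold hatf
  rw [abs_of_nonpos (by linarith), max_eq_right (by linarith)]
  ring

lemma hat_eq_right (N : ℝ) (i : ℕ) (y : ℝ) (h1 : (i:ℝ)/N ≤ y) (h2 : y ≤ (i:ℝ)/N + 1/N)
    (hN : 0 < N) : hatf N i y = (i:ℝ)/N + 1/N - y := by
  unfold hatf
  rw [abs_of_nonneg (by linarith), max_eq_right (by linarith)]
  ring

lemma hat_zero_out (N : ℝ) (i : ℕ) (y : ℝ) (h : |y - (i:ℝ)/N| ≥ 1/N) : hatf N i y = 0 := by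
  unfold hatf
  rw [max_eq_left (by linarith)]

lemma hat_sq (N : ℝ) (hN : 0 < N) (i : ℕ) (hi1 : 1 ≤ i) (him : (i:ℝ) + 1 ≤ N) :
    Rint N i i = 2/(3*N^3) := by
  set c : ℝ := (i:ℝ)/N with hc
  set n : ℝ := 1/N with hn
  have hn0 : 0 < n := by positivity
  have hcn0 : 0 ≤ c - n := by
    rw [hc, hn, div_sub_div_same, le_div_iff₀ hN]
    have : (1:ℝ) ≤ (i:ℝ) := by exact_mod_cast hi1
    linarith
  have hcn1 : c + n ≤ 1 := by
    rw [hc, hn, ← add_div, div_le_one hN]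
    linarith
  have hint : ∀ a b : ℝ, IntervalIntegrable (fun y => hatf N i y * hatf N i y) MeasureTheory.volume a b :=
    fun a b => ((cont_hat N i).mul (cont_hat N i)).intervalIntegrable a b
  unfold Rint
  rw [← integral_add_adjacent_intervals (a := 0) (b := c - n) (c := 1) (hint _ _) (hint _ _),
      ← integral_add_adjacent_intervals (a := c - n) (b := c) (c := 1) (hint _ _) (hint _ _),
      ← integral_add_adjacent_intervals (a := c) (b := c + n) (c := 1) (hint _ _) (hint _ _)]
  have e1 : (∫ y in (0:ℝ)..(c-n), hatf N i y * hatf N i y) = ∫ _ in (0:ℝ)..(c-n), (0:ℝ) := by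
    apply integral_congr
    intro y hy
    rw [Set.uIcc_of_le (by linarith)] at hy
    simp only []
    rw [hat_zero_out N i y (by rw [abs_of_nonpos (by linarith [hy.2])]; linarith [hy.2]), zero_mul]
  have e2 : (∫ y in (c-n)..c, hatf N i y * hatf N i y) = ∫ y in (c-n)..c, (y - c + n)^2 := by
    apply integral_congr
    intro y hy
    rw [Set.uIcc_of_le (by linarith)] at hy
    simp only []
    rw [hat_eq_left N i y (by linarith [hy.1]) hy.2 hN]
    ring
  have e3 : (∫ y in c..(c+n), hatf N i y * hatf N i y) = ∫ y in c..(c+n), (c + n - y)^2 := by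
    apply integral_congr
    intro y hy
    rw [Set.uIcc_of_le (by linarith)] at hy
    simp only []
    rw [hat_eq_right N i y hy.1 hy.2 hN]
    ring
  have e4 : (∫ y in (c+n)..1, hatf N i y * hatf N i y) = ∫ _ in (c+n)..1, (0:ℝ) := by
    apply integral_congr
    intro y hy
    rw [Set.uIcc_of_le (by linarith)] at hy
    simp only []
    rw [hat_zero_out N i y (by rw [abs_of_nonneg (by linarith [hy.1])]; linarith [hy.1]), zero_mul]
  rw [e1, e2, e3, e4, intervalIntegral.integral_zero, intervalIntegral.integral_zero]
  have v2 : (∫ y in (c-n)..c, (y - c + n)^2) = n^3/3 := by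
    rw [integ_deriv (fun y => (y - c + n)^3/3) _ _ _ ?_ (by continuity)]
    · ring
    · intro x
      have h1 : HasDerivAt (fun y : ℝ => (y - c + n)^3) (3*(x - c + n)^2*1) x :=
        (((hasDerivAt_id x).sub_const c).add_const n).pow 3
      exact (h1.div_const 3).congr_deriv (by ring)
  have v3 : (∫ y in c..(c+n), (c + n - y)^2) = n^3/3 := by
    rw [integ_deriv (fun y => -((c + n - y)^3/3)) _ _ _ ?_ (by continuity)]
    · ring
    · intro x
      have h1 : HasDerivAt (fun y : ℝ => (c + n - y)^3) (3*(c + n - x)^2*(-1)) x :=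
        ((hasDerivAt_id x).const_sub (c+n)).pow 3
      have h2 := (h1.div_const 3).neg
      exact h2.congr_deriv (by ring)
  rw [v2, v3, hn]
  field_simp
  ring

lemma hat_adj (N : ℝ) (hN : 0 < N) (i : ℕ) (hi1 : 1 ≤ i) (him : (i:ℝ) + 2 ≤ N) :
    Rint N i (i+1) = 1/(6*N^3) := by
  set c : ℝ := (i:ℝ)/N with hc
  set n : ℝ := 1/N with hn
  have hn0 : 0 < n := by positivity
  have hc1 : ((i+1:ℕ):ℝ)/N = c + n := by push_cast; rw [hc, hn]; ring
  have hc0 : 0 ≤ c := by positivity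
  have hcn1 : c + n + n ≤ 1 := by
    rw [hc, hn, ← add_div, ← add_div, div_le_one hN]
    linarith
  have hint : ∀ a b : ℝ, IntervalIntegrable (fun y => hatf N i y * hatf N (i+1) y) MeasureTheory.volume a b :=
    fun a b => ((cont_hat N i).mul (cont_hat N (i+1))).intervalIntegrable a b
  unfold Rint
  rw [← integral_add_adjacent_intervals (a := 0) (b := c) (c := 1) (hint _ _) (hint _ _),
      ← integral_add_adjacent_intervals (a := c) (b := c + n) (c := 1) (hint _ _) (hint _ _)]
  have e1 : (∫ y in (0:ℝ)..c, hatf N i y * hatf N (i+1) y) = ∫ _ in (0:ℝ)..c, (0:ℝ) := by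
    apply integral_congr
    intro y hy
    rw [Set.uIcc_of_le (by linarith)] at hy
    simp only []
    rw [hat_zero_out N (i+1) y (by rw [hc1, abs_of_nonpos (by linarith [hy.2])]; linarith [hy.2]), mul_zero]
  have e2 : (∫ y in c..(c+n), hatf N i y * hatf N (i+1) y)
      = ∫ y in c..(c+n), (c + n - y) * (y - c) := by
    apply integral_congr
    intro y hy
    rw [Set.uIcc_of_le (by linarith)] at hy
    simp only []
    rw [hat_eq_right N i y hy.1 hy.2 hN, hat_eq_left N (i+1) y (by rw [hc1]; linarith [hy.1]) (by rw [hc1]; linarith [hy.2]) hN, hc1]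
    ring
  have e3 : (∫ y in (c+n)..1, hatf N i y * hatf N (i+1) y) = ∫ _ in (c+n)..1, (0:ℝ) := by
    apply integral_congr
    intro y hy
    rw [Set.uIcc_of_le (by linarith)] at hy
    simp only []
    rw [hat_zero_out N i y (by rw [abs_of_nonneg (by linarith [hy.1])]; linarith [hy.1]), zero_mul]
  rw [e1, e2, e3, intervalIntegral.integral_zero, intervalIntegral.integral_zero]
  have v2 : (∫ y in c..(c+n), (c + n - y) * (y - c)) = n^3/6 := by
    rw [integ_deriv (fun y => n*(y - c)^2/2 - (y - c)^3/3) _ _ _ ?_ (by continuity)]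
    · ring
    · intro x
      have hid : HasDerivAt (fun y : ℝ => y - c) 1 x := (hasDerivAt_id x).sub_const c
      have h1 : HasDerivAt (fun y : ℝ => n*(y - c)^2/2) (n*(2*(x - c)^1*1)/2) x :=
        ((hid.pow 2).const_mul n).div_const 2
      have h2 : HasDerivAt (fun y : ℝ => (y - c)^3/3) (3*(x - c)^2*1/3) x :=
        (hid.pow 3).div_const 3
      exact (h1.sub h2).congr_deriv (by ring)
  rw [v2, hn]
  field_simp
  ring

lemma abel2 (m : ℕ) (u v : ℕ → ℝ) (hu0 : u 0 = 0) (hum : u (m+1) = 0)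
    (hv0 : v 0 = 0) (hvm : v (m+1) = 0) :
    ∑ l ∈ Finset.range m, u (l+1) * (v l - 2*v (l+1) + v (l+2))
      = ∑ l ∈ Finset.range m, (u l - 2*u (l+1) + u (l+2)) * v (l+1) := by
  have key : ∀ l : ℕ, u (l+1) * (v l - 2*v (l+1) + v (l+2)) - (u l - 2*u (l+1) + u (l+2)) * v (l+1)
      = (fun l => u l * v (l+1) - u (l+1) * v l) (l+1) - (fun l => u l * v (l+1) - u (l+1) * v l) l := by
    intro l
    simp only []
    ring
  have tel := Finset.sum_range_sub (fun l => u l * v (l+1) - u (l+1) * v l) m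
  have split : ∑ l ∈ Finset.range m, (u (l+1) * (v l - 2*v (l+1) + v (l+2))
      - (u l - 2*u (l+1) + u (l+2)) * v (l+1)) = 0 := by
    calc ∑ l ∈ Finset.range m, (u (l+1) * (v l - 2*v (l+1) + v (l+2)) - (u l - 2*u (l+1) + u (l+2)) * v (l+1))
        = ∑ l ∈ Finset.range m, ((fun l => u l * v (l+1) - u (l+1) * v l) (l+1) - (fun l => u l * v (l+1) - u (l+1) * v l) l) :=
          Finset.sum_congr rfl (fun l _ => key l)
      _ = (u m * v (m+1) - u (m+1) * v m) - (u 0 * v 1 - u 1 * v 0) := by rw [tel]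
      _ = 0 := by rw [hu0, hum, hv0, hvm]; ring
  rw [Finset.sum_sub_distrib] at split
  linarith

lemma lin_zero (Z : ℕ → ℝ) (m : ℕ) (h0 : Z 0 = 0) (hm : Z (m+1) = 0)
    (hrec : ∀ i, i < m → Z i - 2*Z (i+1) + Z (i+2) = 0) :
    ∀ i, i ≤ m+1 → Z i = 0 := by
  have step : ∀ i, i ≤ m → Z (i+1) = Z i + Z 1 := by
    intro i
    induction i with
    | zero => intro _; rw [h0]; ring
    | succ k ih =>
      intro hk
      have h1 := hrec k (by omega)
      have h2 := ih (by omega)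
      linarith
  have lin : ∀ i, i ≤ m+1 → Z i = i * Z 1 := by
    intro i
    induction i with
    | zero => intro _; rw [h0]; norm_num
    | succ k ih =>
      intro hk
      have h1 := step k (by omega)
      have h2 := ih (by omega)
      push_cast
      rw [h1, h2]
      ring
  have hz1 : Z 1 = 0 := by
    have := lin (m+1) le_rfl
    rw [hm] at this
    have hpos : (0:ℝ) < (m:ℝ) + 1 := by positivity
    push_cast at this
    rcases mul_eq_zero.mp this.symm with h | h
    · linarith
    · exact h
  intro i hi
  rw [lin i hi, hz1, mul_zero]

lemma sin_rec (θ : ℝ) (l : ℕ) :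
    Real.sin (l * θ) + Real.sin ((l+2) * θ) = (2 * Real.cos θ) * Real.sin ((l+1) * θ) := by
  have e1 : (l:ℝ) * θ = ((l:ℝ)+1) * θ - θ := by ring
  have e2 : ((l:ℝ)+2) * θ = ((l:ℝ)+1) * θ + θ := by ring
  rw [e1, e2, Real.sin_sub, Real.sin_add]
  ring

noncomputable def Wv (θ : ℝ) (l : ℕ) : ℝ := Real.sin (l * θ)
noncomputable def Vv (N θ : ℝ) (m i : ℕ) : ℝ := ∑ l ∈ Finset.range m, Wv θ (l+1) * Pint N i (l+1)
noncomputable def Gv (N θ : ℝ) (m i : ℕ) : ℝ := ∑ l ∈ Finset.range m, Wv θ (l+1) * Qint N i (l+1)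

lemma Wv_zero (θ : ℝ) : Wv θ 0 = 0 := by simp [Wv]

lemma Wv_rec (θ : ℝ) (l : ℕ) :
    Wv θ l - 2*Wv θ (l+1) + Wv θ (l+2) = (2*Real.cos θ - 2) * Wv θ (l+1) := by
  unfold Wv
  have := sin_rec θ l
  push_cast
  push_cast at this
  linarith

lemma Vv_sd (N θ : ℝ) (hN : 0 < N) (m i : ℕ) :
    Vv N θ m i - 2*Vv N θ m (i+1) + Vv N θ m (i+2) = -(Gv N θ m (i+1)) := by
  unfold Vv Gv
  rw [Finset.mul_sum, ← Finset.sum_sub_distrib, ← Finset.sum_add_distrib, ← Finset.sum_neg_distrib]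
  apply Finset.sum_congr rfl
  intro l _
  have h := Pint_sd N hN i (l+1)
  linear_combination (Wv θ (l+1)) * h

lemma Gv_eq (N θ : ℝ) (hN : 0 < N) (m : ℕ) (hNm : (m:ℝ)+1 = N) (hWm : Wv θ (m+1) = 0) (i : ℕ) :
    ∑ l ∈ Finset.range m, Wv θ (l+1) * Rint N i (l+1) = (2 - 2*Real.cos θ) * Gv N θ m i := by
  have hv0 : Qint N i 0 = 0 := by
    apply Qint_bd
    left
    simp
  have hvm : Qint N i (m+1) = 0 := by
    apply Qint_bd
    right
    push_cast
    rw [← hNm]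
    field_simp
  have hab := abel2 m (Wv θ) (fun l => Qint N i l) (Wv_zero θ) hWm hv0 hvm
  have lhs_eq : ∑ l ∈ Finset.range m, Wv θ (l+1) * (Qint N i l - 2*Qint N i (l+1) + Qint N i (l+2))
      = -∑ l ∈ Finset.range m, Wv θ (l+1) * Rint N i (l+1) := by
    rw [← Finset.sum_neg_distrib]
    apply Finset.sum_congr rfl
    intro l _
    rw [Qint_sd N hN i l]
    ring
  have rhs_eq : ∑ l ∈ Finset.range m, (Wv θ l - 2*Wv θ (l+1) + Wv θ (l+2)) * Qint N i (l+1)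
      = (2*Real.cos θ - 2) * Gv N θ m i := by
    unfold Gv
    rw [Finset.mul_sum]
    apply Finset.sum_congr rfl
    intro l _
    rw [Wv_rec θ l]
    ring
  rw [lhs_eq, rhs_eq] at hab
  linarith

lemma Rsum_val (N θ : ℝ) (hN : 0 < N) (m : ℕ) (hNm : (m:ℝ)+1 = N) (hWm : Wv θ (m+1) = 0)
    (i : ℕ) (hi1 : 1 ≤ i) (him : i ≤ m) :
    ∑ l ∈ Finset.range m, Wv θ (l+1) * Rint N i (l+1)
      = ((2 + Real.cos θ)/(3*N^3)) * Wv θ i := by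
  set f : ℕ → ℝ := fun l => Wv θ l * Rint N i l with hf
  have ext : ∑ l ∈ Finset.range m, Wv θ (l+1) * Rint N i (l+1) = ∑ l ∈ Finset.range (m+2), f l := by
    rw [Finset.sum_range_succ' f (m+1), Finset.sum_range_succ (fun l => f (l+1)) m]
    have h0 : f 0 = 0 := by rw [hf]; simp only []; rw [Wv_zero, zero_mul]
    have hm1 : f (m+1) = 0 := by rw [hf]; simp only []; rw [hWm, zero_mul]
    rw [h0, hm1]
    ring
  have sub : ∑ l ∈ Finset.range (m+2), f l = ∑ l ∈ ({i-1, i, i+1} : Finset ℕ), f l := by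
    symm
    apply Finset.sum_subset
    · intro x hx
      simp only [Finset.mem_insert, Finset.mem_singleton] at hx
      simp only [Finset.mem_range]
      omega
    · intro x hx hxs
      simp only [Finset.mem_insert, Finset.mem_singleton] at hxs
      push_neg at hxs
      have hfar : i + 2 ≤ x ∨ x + 2 ≤ i := by omega
      rw [hf]
      simp only []
      rw [Rint_far N hN i x hfar, mul_zero]
  have hmem : ({i-1, i, i+1} : Finset ℕ) = insert (i-1) (insert i ({i+1} : Finset ℕ)) := rfl
  have hsum3 : ∑ l ∈ ({i-1, i, i+1} : Finset ℕ), f l = f (i-1) + f i + f (i+1) := by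
    rw [hmem, Finset.sum_insert (by simp; omega), Finset.sum_insert (by simp), Finset.sum_singleton]
    ring
  have vfi : f i = Wv θ i * (2/(3*N^3)) := by
    rw [hf]; simp only []
    rw [hat_sq N hN i hi1 (by have h' : (i:ℝ) ≤ (m:ℝ) := Nat.cast_le.mpr him
                              rw [← hNm]; push_cast; linarith)]
  have vfip : f (i+1) = Wv θ (i+1) * (1/(6*N^3)) := by
    rw [hf]; simp only []
    rcases eq_or_lt_of_le him with he | hlt
    · subst he
      rw [hWm, zero_mul, zero_mul]
    · have h' : (i:ℝ) + 1 ≤ (m:ℝ) := by exact_mod_cast hlt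
      have h'' : (i:ℝ) + 2 ≤ N := by rw [← hNm]; linarith
      rw [hat_adj N hN i hi1 h'']
  have vfim : f (i-1) = Wv θ (i-1) * (1/(6*N^3)) := by
    rw [hf]; simp only []
    rcases eq_or_lt_of_le hi1 with he | hlt
    · have h0 : i - 1 = 0 := by omega
      rw [h0, Wv_zero, zero_mul, zero_mul]
    · have h2 : 2 ≤ i := hlt
      have e1 : i - 1 + 1 = i := by omega
      rw [Rint_symm]
      have := hat_adj N hN (i-1) (by omega) (by
        have : ((i-1:ℕ):ℝ) = (i:ℝ) - 1 := by
          push_cast [Nat.cast_sub (by omega : 1 ≤ i)]; ring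
        rw [this, ← hNm]
        have : (i:ℝ) ≤ (m:ℝ) := by exact_mod_cast him
        linarith)
      rw [e1] at this
      rw [this]
  have wrec : Wv θ (i-1) + Wv θ (i+1) = (2*Real.cos θ) * Wv θ i := by
    have := sin_rec θ (i-1)
    have e1 : ((i-1:ℕ):ℝ) = (i:ℝ) - 1 := by push_cast [Nat.cast_sub (by omega : 1 ≤ i)]; ring
    unfold Wv
    push_cast [Nat.cast_sub (by omega : 1 ≤ i)] at this ⊢
    convert this using 3 <;> ring
  rw [ext, sub, hsum3, vfi, vfip, vfim]
  have : Wv θ (i-1) * (1/(6*N^3)) + Wv θ i * (2/(3*N^3)) + Wv θ (i+1) * (1/(6*N^3))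
      = (Wv θ (i-1) + Wv θ (i+1)) * (1/(6*N^3)) + Wv θ i * (2/(3*N^3)) := by ring
  rw [this, wrec]
  field_simp
  ring

/-- Let `m ≥ 1` and `1 ≤ j ≤ m`.  The vector `w ∈ ℝᵐ` with components
`w_l = sin(jπ·l/(m+1))`, `l = 1,…,m`, satisfies `T_m w = λ_{j,m} w`, where
`λ_{j,m} = (1 − (2/3)·sin²(jπ/(2(m+1)))) / (16·(m+1)³·sin⁴(jπ/(2(m+1))))` and
`(T_m)_{il} = ∫₀¹ κ₀(i/(m+1), y)·κ₀(l/(m+1), y) dy`. -/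
theorem stmt_1 (m : ℕ) (hm : 1 ≤ m) (j : ℕ) (hj1 : 1 ≤ j) (hjm : j ≤ m)
    (T : Matrix (Fin m) (Fin m) ℝ)
    (hT : ∀ i l : Fin m, T i l =
      ∫ y in (0:ℝ)..1,
        kappa0 (((i : ℕ) + 1 : ℝ) / ((m : ℝ) + 1)) y *
        kappa0 (((l : ℕ) + 1 : ℝ) / ((m : ℝ) + 1)) y)
    (w : Fin m → ℝ)
    (hw : ∀ l : Fin m, w l = Real.sin ((j : ℝ) * π * ((l : ℕ) + 1 : ℝ) / ((m : ℝ) + 1))) :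
    T.mulVec w =
      ((1 - (2 / 3) * Real.sin ((j : ℝ) * π / (2 * ((m : ℝ) + 1))) ^ 2) /
        (16 * ((m : ℝ) + 1) ^ 3 * Real.sin ((j : ℝ) * π / (2 * ((m : ℝ) + 1))) ^ 4)) • w := by
  set N : ℝ := (m:ℝ) + 1 with hNdef
  have hN : (0:ℝ) < N := by rw [hNdef]; positivity
  have hNm : (m:ℝ) + 1 = N := hNdef.symm
  set θ : ℝ := (j:ℝ) * π / N with hθ
  set s : ℝ := Real.sin ((j:ℝ) * π / (2 * N)) with hsdef
  set lam : ℝ := (1 - 2/3 * s^2) / (16 * N^3 * s^4) with hlamdef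
  have hsin : Real.sin (θ/2) = s := by rw [hsdef, hθ, div_div, mul_comm N 2]
  have hjr : (1:ℝ) ≤ (j:ℝ) := by exact_mod_cast hj1
  have hjm' : (j:ℝ) ≤ (m:ℝ) := by exact_mod_cast hjm
  have hs_pos : 0 < s := by
    rw [hsdef]
    apply Real.sin_pos_of_pos_of_lt_pi
    · apply div_pos (by positivity) (by positivity)
    · rw [div_lt_iff₀ (by positivity)]
      nlinarith [Real.pi_pos]
  have hs0 : s ≠ 0 := ne_of_gt hs_pos
  have hN0 : N ≠ 0 := ne_of_gt hN
  have hcos : Real.cos θ = 1 - 2*s^2 := by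
    have h1 := Real.cos_two_mul (θ/2)
    have h2 := Real.sin_sq_add_cos_sq (θ/2)
    have e : 2*(θ/2) = θ := by ring
    rw [e, ] at h1
    rw [hsin] at h2
    nlinarith
  have hWm : Wv θ (m+1) = 0 := by
    unfold Wv
    have e : ((m+1:ℕ):ℝ) * θ = (j:ℝ) * π := by
      rw [hθ]
      push_cast
      rw [← hNm]
      field_simp
    rw [e, Real.sin_nat_mul_pi]
  have hZ0 : Vv N θ m 0 - lam * Wv θ 0 = 0 := by
    have hv : Vv N θ m 0 = 0 := by
      unfold Vv
      apply Finset.sum_eq_zero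
      intro l _
      rw [Pint_bd N 0 (l+1) (by left; simp), mul_zero]
    rw [hv, Wv_zero, mul_zero, sub_zero]
  have hZm : Vv N θ m (m+1) - lam * Wv θ (m+1) = 0 := by
    have hv : Vv N θ m (m+1) = 0 := by
      unfold Vv
      apply Finset.sum_eq_zero
      intro l _
      rw [Pint_bd N (m+1) (l+1) (by right; push_cast; rw [← hNm]; field_simp), mul_zero]
    rw [hv, hWm, mul_zero, sub_zero]
  have hrec : ∀ i, i < m →
      (Vv N θ m i - lam * Wv θ i) - 2*(Vv N θ m (i+1) - lam * Wv θ (i+1))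
        + (Vv N θ m (i+2) - lam * Wv θ (i+2)) = 0 := by
    intro i hi
    have h1 := Vv_sd N θ hN m i
    have h3 := Wv_rec θ i
    have hG := Gv_eq N θ hN m hNm hWm (i+1)
    have hR := Rsum_val N θ hN m hNm hWm (i+1) (by omega) (by omega)
    have h4 : (2 - 2*Real.cos θ) * Gv N θ m (i+1) = ((2 + Real.cos θ)/(3*N^3)) * Wv θ (i+1) := by
      rw [← hG, hR]
    have hbig : (12*N^3*s^2) * Gv N θ m (i+1) = (3 - 2*s^2) * Wv θ (i+1) := by
      have h5 : (3*N^3) * ((2 - 2*Real.cos θ) * Gv N θ m (i+1))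
          = (3*N^3) * ((2 + Real.cos θ)/(3*N^3) * Wv θ (i+1)) := by rw [h4]
      have h6 : (3*N^3) * ((2 + Real.cos θ)/(3*N^3) * Wv θ (i+1))
          = (2 + Real.cos θ) * Wv θ (i+1) := by field_simp
      rw [h6] at h5
      rw [hcos] at h5
      linear_combination h5
    have hne : (12*N^3*s^2 : ℝ) ≠ 0 := by positivity
    have hGfinal : Gv N θ m (i+1) = lam * (4*s^2) * Wv θ (i+1) := by
      apply mul_left_cancel₀ hne
      rw [hbig, hlamdef]
      field_simp
      ring
    linear_combination h1 - lam*h3 - hGfinal - 2*lam*(Wv θ (i+1))*hcos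
  have hZ := lin_zero (fun i => Vv N θ m i - lam * Wv θ i) m hZ0 hZm hrec
  funext i
  have hwW : ∀ l : Fin m, w l = Wv θ ((l:ℕ)+1) := by
    intro l
    rw [hw l]
    unfold Wv
    congr 1
    rw [hθ]
    push_cast
    rw [← hNm]
    field_simp
  have hTv : (T.mulVec w) i = Vv N θ m ((i:ℕ)+1) := by
    unfold Vv
    rw [← Fin.sum_univ_eq_sum_range (fun l => Wv θ (l+1) * Pint N ((i:ℕ)+1) (l+1)) m]
    simp only [Matrix.mulVec, dotProduct]
    apply Finset.sum_congr rfl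
    intro l _
    rw [hT i l, hwW l]
    unfold Pint
    rw [mul_comm]
    congr 1
    push_cast
    rw [← hNm]
  have hZi := hZ ((i:ℕ)+1) (by omega)
  rw [Pi.smul_apply, smul_eq_mul, hTv, hwW i]
  linarith
end

section
/- Let f ∈ H, δ > 0, 0 ≤ k ≤ m, and let Z = (Z_1,…,Z_m) be independent square-integrable real random variables with E[Z_l] = 0 and E[Z_l²] = 1. Set g^δ := K_m f + δZ ∈ ℝᵐ, f_k^δ := Σ_{j=1}^k σ_j⁻¹ (g^δ, u_j)_{ℝᵐ} v_j, and f_m := Σ_{j=1}^m ⟨f, v_j⟩ v_j. Then E[‖f_k^δ − f‖²] = δ²·Σ_{j=1}^k σ_j⁻² + Σ_{j=k+1}^m ⟨f, v_j⟩² + ‖f_m − f‖². -/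
open MeasureTheory ProbabilityTheory
open scoped RealInnerProductSpace

/-- Bias–variance decomposition of the spectral cut-off estimator.
`H` is a real Hilbert space, `K_m : H → ℝᵐ` has singular value decomposition
`(v_j, u_j, σ_j)`; with noisy data `g^δ = K_m f + δZ` (the `Z_l` independent,
square-integrable, mean `0`, variance `1`), the estimator
`f_k^δ = Σ_{j=1}^k σ_j⁻¹ (g^δ, u_j) v_j` satisfies
`E‖f_k^δ − f‖² = δ² Σ_{j=1}^k σ_j⁻² + Σ_{j=k+1}^m ⟨f,v_j⟩² + ‖f_m − f‖²`. -/
theorem stmt_3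
    {H : Type*} [NormedAddCommGroup H] [InnerProductSpace ℝ H] [CompleteSpace H]
    {m : ℕ} (Km : H →L[ℝ] (Fin m → ℝ))
    (v : Fin m → H) (u : Fin m → Fin m → ℝ) (σ : Fin m → ℝ)
    (hv : Orthonormal ℝ v)
    (hu : ∀ i j : Fin m, (∑ l, u i l * u j l) = if i = j then (1:ℝ) else 0)
    (hσpos : ∀ j, 0 < σ j) (hσdec : ∀ i j : Fin m, i ≤ j → σ j ≤ σ i)
    (hK : ∀ j, Km (v j) = fun l => σ j * u j l)
    (hKadj : ∀ (j : Fin m) (x : H), (∑ l, Km x l * u j l) = σ j * ⟪x, v j⟫)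
    {Ω : Type*} [MeasurableSpace Ω] {μ : Measure Ω} [IsProbabilityMeasure μ]
    (Z : Fin m → Ω → ℝ) (hZmeas : ∀ l, Measurable (Z l))
    (hZindep : iIndepFun Z μ)
    (hZsq : ∀ l, MemLp (Z l) 2 μ)
    (hZmean : ∀ l, (∫ ω, Z l ω ∂μ) = 0)
    (hZvar : ∀ l, (∫ ω, (Z l ω) ^ 2 ∂μ) = 1)
    (f : H) (δ : ℝ) (hδ : 0 < δ) (k : ℕ) (hk : k ≤ m) :
    (∫ ω, ‖(∑ j ∈ Finset.univ.filter fun j : Fin m => (j : ℕ) < k,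
            ((σ j)⁻¹ * ∑ l, (Km f l + δ * Z l ω) * u j l) • v j) - f‖ ^ 2 ∂μ)
      = δ ^ 2 * (∑ j ∈ Finset.univ.filter fun j : Fin m => (j : ℕ) < k, ((σ j) ^ 2)⁻¹)
        + (∑ j ∈ Finset.univ.filter fun j : Fin m => k ≤ (j : ℕ), ⟪f, v j⟫ ^ 2)
        + ‖(∑ j, ⟪f, v j⟫ • v j) - f‖ ^ 2 := by
  classical
  set S : Finset (Fin m) := Finset.univ.filter fun j : Fin m => (j : ℕ) < k with hS
  set T : Finset (Fin m) := Finset.univ.filter fun j : Fin m => k ≤ (j : ℕ) with hT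
  set W : Fin m → Ω → ℝ := fun j ω => ∑ l, Z l ω * u j l with hW
  set b : H := (∑ j ∈ S, ⟪f, v j⟫ • v j) - f with hb
  -- basic integrability facts
  have hZint : ∀ l, Integrable (Z l) μ := fun l => (hZsq l).integrable one_le_two
  have hZZint : ∀ l l', Integrable (fun ω => Z l ω * Z l' ω) μ := by
    intro l l'
    rcases eq_or_ne l l' with rfl | hne
    · simpa [sq] using (hZsq l).integrable_sq
    · exact (hZindep.indepFun hne).integrable_mul (hZint l) (hZint l')
  have hZZ : ∀ l l', (∫ ω, Z l ω * Z l' ω ∂μ) = if l = l' then 1 else 0 := by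
    intro l l'
    rcases eq_or_ne l l' with rfl | hne
    · simpa [sq] using hZvar l
    · rw [if_neg hne, IndepFun.integral_fun_mul_eq_mul_integral (hZindep.indepFun hne) (hZmeas l).aestronglyMeasurable
        (hZmeas l').aestronglyMeasurable, hZmean l, zero_mul]
  have hWint : ∀ j, Integrable (W j) μ := fun j =>
    integrable_finset_sum _ fun l _ => (hZint l).mul_const _
  have hWmean : ∀ j, (∫ ω, W j ω ∂μ) = 0 := by
    intro j
    rw [hW]
    rw [integral_finset_sum _ fun l _ => (hZint l).mul_const _]
    simp [integral_mul_const, hZmean]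
  have hWsq_eq : ∀ j, (fun ω => (W j ω) ^ 2)
      = fun ω => ∑ l, ∑ l', (Z l ω * Z l' ω) * (u j l * u j l') := by
    intro j
    funext ω
    rw [sq, hW, Finset.sum_mul_sum]
    exact Finset.sum_congr rfl fun l _ => Finset.sum_congr rfl fun l' _ => by ring
  have hW2int : ∀ j, Integrable (fun ω => (W j ω) ^ 2) μ := by
    intro j
    rw [hWsq_eq j]
    exact integrable_finset_sum _ fun l _ =>
      integrable_finset_sum _ fun l' _ => (hZZint l l').mul_const _
  have hW2 : ∀ j, (∫ ω, (W j ω) ^ 2 ∂μ) = 1 := by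
    intro j
    rw [hWsq_eq j, integral_finset_sum _ fun l _ =>
      integrable_finset_sum _ fun l' _ => (hZZint l l').mul_const _]
    have : ∀ l : Fin m, (∫ ω, ∑ l', (Z l ω * Z l' ω) * (u j l * u j l') ∂μ)
        = u j l * u j l := by
      intro l
      rw [integral_finset_sum _ fun l' _ => (hZZint l l').mul_const _]
      have : ∀ l' : Fin m, (∫ ω, (Z l ω * Z l' ω) * (u j l * u j l') ∂μ)
          = (if l = l' then 1 else 0) * (u j l * u j l') := by
        intro l'; rw [integral_mul_const, hZZ]
      simp only [this]
      simp [Finset.sum_ite_eq]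
    simp only [this]
    simpa using hu j j
  -- pointwise rewrite of the integrand
  have hpt : ∀ ω, ‖(∑ j ∈ S, ((σ j)⁻¹ * ∑ l, (Km f l + δ * Z l ω) * u j l) • v j) - f‖ ^ 2
      = (∑ j ∈ S, (δ * (σ j)⁻¹) ^ 2 * (W j ω) ^ 2)
        + (∑ j ∈ S, (2 * δ * (σ j)⁻¹ * ⟪v j, b⟫) * W j ω) + ‖b‖ ^ 2 := by
    intro ω
    have hcoef : ∀ j ∈ S, ((σ j)⁻¹ * ∑ l, (Km f l + δ * Z l ω) * u j l)
        = ⟪f, v j⟫ + (δ * (σ j)⁻¹ * W j ω) := by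
      intro j _
      have h1 : (∑ l, (Km f l + δ * Z l ω) * u j l)
          = (∑ l, Km f l * u j l) + δ * ∑ l, Z l ω * u j l := by
        rw [Finset.mul_sum, ← Finset.sum_add_distrib]
        exact Finset.sum_congr rfl fun l _ => by ring
      rw [h1, hKadj j f, hW]
      field_simp [(hσpos j).ne']
    have hvec : (∑ j ∈ S, ((σ j)⁻¹ * ∑ l, (Km f l + δ * Z l ω) * u j l) • v j) - f
        = (∑ j ∈ S, (δ * (σ j)⁻¹ * W j ω) • v j) + b := by
      rw [Finset.sum_congr rfl fun j hj => by rw [hcoef j hj]]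
      simp only [add_smul, Finset.sum_add_distrib, hb]
      abel
    rw [hvec, norm_add_sq_real]
    have hnorm : ‖∑ j ∈ S, (δ * (σ j)⁻¹ * W j ω) • v j‖ ^ 2
        = ∑ j ∈ S, (δ * (σ j)⁻¹ * W j ω) ^ 2 := by
      rw [← real_inner_self_eq_norm_sq, hv.inner_sum]
      simp [sq]
    have hinner : ⟪∑ j ∈ S, (δ * (σ j)⁻¹ * W j ω) • v j, b⟫
        = ∑ j ∈ S, (δ * (σ j)⁻¹ * W j ω) * ⟪v j, b⟫ := by
      rw [sum_inner]; simp [real_inner_smul_left]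
    rw [hnorm, hinner, Finset.mul_sum]
    congr 2
    · exact Finset.sum_congr rfl fun j _ => by ring
    · exact Finset.sum_congr rfl fun j _ => by ring
  -- the bias term
  have hbias : ‖b‖ ^ 2 = (∑ j ∈ T, ⟪f, v j⟫ ^ 2) + ‖(∑ j, ⟪f, v j⟫ • v j) - f‖ ^ 2 := by
    set g : H := (∑ j, ⟪f, v j⟫ • v j) - f with hg
    set e : H := ∑ j ∈ T, ⟪f, v j⟫ • v j with he
    have hbg : b = g - e := by
      rw [hb, hg, he, hS, hT]
      have hsplit : (∑ j, ⟪f, v j⟫ • v j)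
          = (∑ j ∈ Finset.univ.filter fun j : Fin m => (j : ℕ) < k, ⟪f, v j⟫ • v j)
            + ∑ j ∈ Finset.univ.filter fun j : Fin m => ¬ (j : ℕ) < k, ⟪f, v j⟫ • v j :=
        (Finset.sum_filter_add_sum_filter_not _ _ _).symm
      have hTeq : (Finset.univ.filter fun j : Fin m => k ≤ (j : ℕ))
          = Finset.univ.filter fun j : Fin m => ¬ (j : ℕ) < k := by
        apply Finset.filter_congr; intro j _; simp [not_lt]
      rw [hTeq, hsplit]
      abel
    have hvg : ∀ j : Fin m, ⟪v j, g⟫ = 0 := by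
      intro j
      rw [hg, inner_sub_right, hv.inner_right_fintype]
      rw [real_inner_comm, sub_self]
    have hge : ⟪g, e⟫ = 0 := by
      rw [he, inner_sum]
      refine Finset.sum_eq_zero fun j _ => ?_
      rw [real_inner_smul_right, real_inner_comm (v j) g, hvg j, mul_zero]
    have hne2 : ‖e‖ ^ 2 = ∑ j ∈ T, ⟪f, v j⟫ ^ 2 := by
      rw [he, ← real_inner_self_eq_norm_sq, hv.inner_sum]
      simp [sq]
    rw [hbg, norm_sub_sq_real, hge, hne2]
    ring
  -- put it together
  calc (∫ ω, ‖(∑ j ∈ S, ((σ j)⁻¹ * ∑ l, (Km f l + δ * Z l ω) * u j l) • v j) - f‖ ^ 2 ∂μ)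
      = ∫ ω, ((∑ j ∈ S, (δ * (σ j)⁻¹) ^ 2 * (W j ω) ^ 2)
          + (∑ j ∈ S, (2 * δ * (σ j)⁻¹ * ⟪v j, b⟫) * W j ω) + ‖b‖ ^ 2) ∂μ := by
        exact integral_congr_ae (Filter.Eventually.of_forall hpt)
    _ = δ ^ 2 * (∑ j ∈ S, ((σ j) ^ 2)⁻¹) + (∑ j ∈ T, ⟪f, v j⟫ ^ 2)
          + ‖(∑ j, ⟪f, v j⟫ • v j) - f‖ ^ 2 := by
        have hint1 : Integrable (fun ω => ∑ j ∈ S, (δ * (σ j)⁻¹) ^ 2 * (W j ω) ^ 2) μ :=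
          integrable_finset_sum _ fun j _ => (hW2int j).const_mul _
        have hint2 : Integrable (fun ω => ∑ j ∈ S, (2 * δ * (σ j)⁻¹ * ⟪v j, b⟫) * W j ω) μ :=
          integrable_finset_sum _ fun j _ => (hWint j).const_mul _
        have hint12 : Integrable (fun ω => (∑ j ∈ S, (δ * (σ j)⁻¹) ^ 2 * (W j ω) ^ 2)
            + (∑ j ∈ S, (2 * δ * (σ j)⁻¹ * ⟪v j, b⟫) * W j ω)) μ := hint1.add hint2
        rw [integral_add hint12 (integrable_const _), integral_add hint1 hint2,
          integral_finset_sum _ fun j _ => (hW2int j).const_mul _,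
          integral_finset_sum _ fun j _ => (hWint j).const_mul _]
        simp only [integral_const_mul, hW2, hWmean, mul_zero, mul_one, Finset.sum_const_zero]
        rw [integral_const]
        simp only [measure_univ, probReal_univ, mul_one, ENNReal.toReal_one, one_smul, add_zero]
        rw [hbias, Finset.mul_sum]
        have : ∀ j ∈ S, (δ * (σ j)⁻¹) ^ 2 = δ ^ 2 * ((σ j) ^ 2)⁻¹ := fun j _ => by
          rw [mul_pow, ← inv_pow]
        rw [Finset.sum_congr rfl this]
        ring
end

section
/- For every m ≥ 1 and every 1 ≤ k ≤ m, one has (16·k⁵)/(5·(m+1)) ≤ Σ_{j=1}^k σ_{j,m}⁻² ≤ (3π⁴·k⁵)/(m+1). -/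
open Real

/-- The singular values `σ_{j,m}` of the semi-discrete operator associated with the kernel
`κ₀(x,y) = min(x(1−y), y(1−x))` on the uniform grid `l/(m+1)`:
`σ_{j,m} = (1/(4(m+1)^{3/2} sin²(jπ/(2(m+1))))) √(1 − (2/3) sin²(jπ/(2(m+1))))`. -/
noncomputable def sigJM (m j : ℕ) : ℝ :=
  1 / (4 * Real.sqrt (((m : ℝ) + 1) ^ 3) * Real.sin ((j : ℝ) * π / (2 * ((m : ℝ) + 1))) ^ 2) *
    Real.sqrt (1 - (2 / 3) * Real.sin ((j : ℝ) * π / (2 * ((m : ℝ) + 1))) ^ 2)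

lemma sum_pow4_lower (k : ℕ) : (k : ℝ) ^ 5 / 5 ≤ ∑ j ∈ Finset.Icc 1 k, (j : ℝ) ^ 4 := by
  induction k with
  | zero => simp
  | succ n ih =>
    rw [Finset.sum_Icc_succ_top (by omega)]
    push_cast
    have hn : (0:ℝ) ≤ (n:ℝ) := Nat.cast_nonneg n
    nlinarith [ih, hn, sq_nonneg ((n : ℝ)), mul_nonneg (mul_nonneg hn hn) hn]

lemma sum_pow4_upper (k : ℕ) : ∑ j ∈ Finset.Icc 1 k, (j : ℝ) ^ 4 ≤ (k : ℝ) ^ 5 := by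
  induction k with
  | zero => simp
  | succ n ih =>
    rw [Finset.sum_Icc_succ_top (by omega)]
    push_cast
    have hn : (0:ℝ) ≤ (n:ℝ) := Nat.cast_nonneg n
    nlinarith [ih, hn, sq_nonneg ((n : ℝ))]

lemma sig_inv_eq (m j : ℕ) (hj1 : 1 ≤ j) (hjm : j ≤ m) :
    ((sigJM m j) ^ 2)⁻¹ =
      16 * ((m : ℝ) + 1) ^ 3 * Real.sin ((j : ℝ) * π / (2 * ((m : ℝ) + 1))) ^ 4 /
        (1 - (2 / 3) * Real.sin ((j : ℝ) * π / (2 * ((m : ℝ) + 1))) ^ 2) := by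
  set s := Real.sin ((j : ℝ) * π / (2 * ((m : ℝ) + 1))) with hs
  have hM : (0:ℝ) < (m : ℝ) + 1 := by positivity
  have hθpos : 0 < (j : ℝ) * π / (2 * ((m : ℝ) + 1)) := by
    have : (0:ℝ) < (j : ℝ) := by exact_mod_cast hj1
    positivity
  have hθlt : (j : ℝ) * π / (2 * ((m : ℝ) + 1)) < π := by
    have hj : (j : ℝ) ≤ (m : ℝ) := by exact_mod_cast hjm
    rw [div_lt_iff₀ (by positivity)]
    nlinarith [Real.pi_pos]
  have hspos : 0 < s := Real.sin_pos_of_pos_of_lt_pi hθpos hθlt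
  have hsle : s ≤ 1 := Real.sin_le_one _
  have hden : 0 < 1 - (2 / 3) * s ^ 2 := by nlinarith
  have hsq3 : Real.sqrt (((m : ℝ) + 1) ^ 3) ^ 2 = ((m : ℝ) + 1) ^ 3 :=
    Real.sq_sqrt (by positivity)
  have hsq2 : Real.sqrt (1 - (2 / 3) * s ^ 2) ^ 2 = 1 - (2 / 3) * s ^ 2 :=
    Real.sq_sqrt hden.le
  have hsqrt3pos : 0 < Real.sqrt (((m : ℝ) + 1) ^ 3) := Real.sqrt_pos.2 (by positivity)
  rw [sigJM, ← hs]
  rw [mul_pow, div_pow, one_pow, mul_pow, mul_pow, hsq3, hsq2]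
  rw [← pow_mul]
  field_simp
  ring

lemma aux_bounds (Mr jr s : ℝ) (hM : 0 < Mr) (hj : 0 < jr) (hs : 0 < s) (hs1 : s ≤ 1)
    (hlo : jr / Mr ≤ s) (hhi : s ≤ jr * π / (2 * Mr)) :
    16 * jr ^ 4 / Mr ≤ 16 * Mr ^ 3 * s ^ 4 / (1 - 2 / 3 * s ^ 2) ∧
    16 * Mr ^ 3 * s ^ 4 / (1 - 2 / 3 * s ^ 2) ≤ 3 * π ^ 4 * jr ^ 4 / Mr := by
  have hπ : (0:ℝ) < π := Real.pi_pos
  have hden : 0 < 1 - 2 / 3 * s ^ 2 := by nlinarith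
  have hden' : 1 - 2 / 3 * s ^ 2 ≤ 1 := by nlinarith
  have hden'' : (1:ℝ)/3 ≤ 1 - 2 / 3 * s ^ 2 := by nlinarith
  have hjs : jr ≤ s * Mr := by
    have := mul_le_mul_of_nonneg_right hlo hM.le
    rwa [div_mul_cancel₀ _ (ne_of_gt hM)] at this
  constructor
  · rw [div_le_div_iff₀ hM hden]
    have h2 : jr ^ 4 ≤ (s * Mr) ^ 4 := pow_le_pow_left₀ hj.le hjs 4
    have hA : 16 * jr ^ 4 * (1 - 2/3 * s^2) ≤ 16 * jr ^ 4 := by nlinarith [pow_pos hj 4]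
    nlinarith [h2]
  · rw [div_le_div_iff₀ hden hM]
    have hsM : s * (2 * Mr) ≤ jr * π := by
      have := mul_le_mul_of_nonneg_right hhi (by positivity : (0:ℝ) ≤ 2 * Mr)
      rwa [div_mul_cancel₀ _ (by positivity : (2:ℝ) * Mr ≠ 0)] at this
    have h1 : (s * (2 * Mr)) ^ 4 ≤ (jr * π) ^ 4 :=
      pow_le_pow_left₀ (by positivity) hsM 4
    have h2 : 16 * Mr ^ 3 * s ^ 4 * Mr ≤ π ^ 4 * jr ^ 4 := by nlinarith [h1]
    have hX : (0:ℝ) ≤ 3 * π ^ 4 * jr ^ 4 := by positivity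
    have h3 := mul_le_mul_of_nonneg_left hden'' hX
    linarith

lemma sig_inv_bounds (m j : ℕ) (hj1 : 1 ≤ j) (hjm : j ≤ m) :
    16 * (j : ℝ) ^ 4 / ((m : ℝ) + 1) ≤ ((sigJM m j) ^ 2)⁻¹ ∧
    ((sigJM m j) ^ 2)⁻¹ ≤ 3 * π ^ 4 * (j : ℝ) ^ 4 / ((m : ℝ) + 1) := by
  have hπ : (0:ℝ) < π := Real.pi_pos
  have hMpos : (0:ℝ) < (m : ℝ) + 1 := by positivity
  have hjpos : (0:ℝ) < (j : ℝ) := by exact_mod_cast hj1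
  have hjM : (j : ℝ) ≤ (m : ℝ) := by exact_mod_cast hjm
  have hθpos : 0 < (j : ℝ) * π / (2 * ((m : ℝ) + 1)) := by positivity
  have hθle : (j : ℝ) * π / (2 * ((m : ℝ) + 1)) ≤ π / 2 := by
    rw [div_le_div_iff₀ (by positivity) (by norm_num)]
    nlinarith
  have hθlt : (j : ℝ) * π / (2 * ((m : ℝ) + 1)) < π := lt_of_le_of_lt hθle (by linarith)
  have hspos : 0 < Real.sin ((j : ℝ) * π / (2 * ((m : ℝ) + 1))) :=
    Real.sin_pos_of_pos_of_lt_pi hθpos hθlt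
  have hsle : Real.sin ((j : ℝ) * π / (2 * ((m : ℝ) + 1))) ≤ 1 := Real.sin_le_one _
  have hslo : (j : ℝ) / ((m : ℝ) + 1) ≤ Real.sin ((j : ℝ) * π / (2 * ((m : ℝ) + 1))) := by
    have h := Real.mul_le_sin hθpos.le hθle
    have he : (j : ℝ) / ((m : ℝ) + 1) = 2 / π * ((j : ℝ) * π / (2 * ((m : ℝ) + 1))) := by
      field_simp
    rw [he]; exact h
  have hshi : Real.sin ((j : ℝ) * π / (2 * ((m : ℝ) + 1))) ≤
      (j : ℝ) * π / (2 * ((m : ℝ) + 1)) := Real.sin_le hθpos.le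
  have heq := sig_inv_eq m j hj1 hjm
  rw [heq]
  exact aux_bounds ((m:ℝ)+1) (j:ℝ) _ hMpos hjpos hspos hsle hslo hshi

/-- For every `m ≥ 1` and `1 ≤ k ≤ m`:
`16 k⁵ / (5(m+1)) ≤ Σ_{j=1}^k σ_{j,m}⁻² ≤ 3π⁴ k⁵ / (m+1)`. -/
theorem stmt_4 (m : ℕ) (hm : 1 ≤ m) (k : ℕ) (hk1 : 1 ≤ k) (hkm : k ≤ m) :
    16 * (k : ℝ) ^ 5 / (5 * ((m : ℝ) + 1)) ≤ (∑ j ∈ Finset.Icc 1 k, ((sigJM m j) ^ 2)⁻¹) ∧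
    (∑ j ∈ Finset.Icc 1 k, ((sigJM m j) ^ 2)⁻¹) ≤ 3 * π ^ 4 * (k : ℝ) ^ 5 / ((m : ℝ) + 1) := by
  have hMpos : (0:ℝ) < (m : ℝ) + 1 := by positivity
  have hπ : (0:ℝ) < π := Real.pi_pos
  constructor
  · calc 16 * (k : ℝ) ^ 5 / (5 * ((m : ℝ) + 1))
        = 16 * ((k:ℝ)^5 / 5) / ((m:ℝ)+1) := by
          field_simp
    _ ≤ 16 * (∑ j ∈ Finset.Icc 1 k, (j : ℝ) ^ 4) / ((m:ℝ)+1) := by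
        gcongr
        exact sum_pow4_lower k
    _ = ∑ j ∈ Finset.Icc 1 k, 16 * (j : ℝ) ^ 4 / ((m:ℝ)+1) := by
        rw [Finset.mul_sum, Finset.sum_div]
    _ ≤ ∑ j ∈ Finset.Icc 1 k, ((sigJM m j) ^ 2)⁻¹ := by
        apply Finset.sum_le_sum
        intro j hj
        rw [Finset.mem_Icc] at hj
        exact (sig_inv_bounds m j hj.1 (le_trans hj.2 hkm)).1
  · calc (∑ j ∈ Finset.Icc 1 k, ((sigJM m j) ^ 2)⁻¹)
        ≤ ∑ j ∈ Finset.Icc 1 k, 3 * π ^ 4 * (j : ℝ) ^ 4 / ((m:ℝ)+1) := by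
          apply Finset.sum_le_sum
          intro j hj
          rw [Finset.mem_Icc] at hj
          exact (sig_inv_bounds m j hj.1 (le_trans hj.2 hkm)).2
    _ = 3 * π ^ 4 * (∑ j ∈ Finset.Icc 1 k, (j : ℝ) ^ 4) / ((m:ℝ)+1) := by
        rw [Finset.mul_sum, Finset.sum_div]
    _ ≤ 3 * π ^ 4 * (k:ℝ)^5 / ((m:ℝ)+1) := by
        gcongr
        exact sum_pow4_upper k
end

section
/- Let v ∈ H and λ, ε > 0 with ‖Kv − λv‖ ≤ ε. Let I ⊆ ℕ and c > 0 be such that |λ_i − λ| ≥ c for every i ∉ I (in the paper, I is the set of indices minimizing |λ_i − λ| and c := min_{i∉I} |λ_i − λ|, assumed positive), and let P denote the orthogonal projection of H onto the closed linear span of {v_i : i ∈ I}. Then ‖v‖² ≥ ⟨v, Pv⟩ ≥ ‖v‖² − ε²/c². -/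
open scoped RealInnerProductSpace

/-- Let `K : H → H` be a compact, self-adjoint, positive semi-definite
operator on a real Hilbert space with orthonormal eigenbasis `(v_i)` and eigenvalues
`(λ_i)`.  Let `v ∈ H` and `λ, ε > 0` with `‖Kv − λv‖ ≤ ε`.  Let `I ⊆ ℕ` and `c > 0` be
such that `|λ_i − λ| ≥ c` for all `i ∉ I`, and let `P` be the orthogonal projection of `H`
onto the closed linear span of `{v_i : i ∈ I}`.  Then
`‖v‖² ≥ ⟨v, Pv⟩ ≥ ‖v‖² − ε²/c²`. -/
theorem stmt_11 {H : Type*} [NormedAddCommGroup H] [InnerProductSpace ℝ H] [CompleteSpace H]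
    (K : H →L[ℝ] H) (hcpt : IsCompactOperator K)
    (hsa : ∀ x y : H, ⟪K x, y⟫ = ⟪x, K y⟫) (hpsd : ∀ x : H, 0 ≤ ⟪K x, x⟫)
    (v : ℕ → H) (hv : Orthonormal ℝ v)
    (htot : ⊤ ≤ (Submodule.span ℝ (Set.range v)).topologicalClosure)
    (lam : ℕ → ℝ) (hlam : ∀ i, 0 ≤ lam i) (heig : ∀ i, K (v i) = lam i • v i)
    (w : H) (l ε : ℝ) (hl : 0 < l) (hε : 0 < ε) (hKw : ‖K w - l • w‖ ≤ ε)
    (I : Set ℕ) (c : ℝ) (hc : 0 < c) (hsep : ∀ i ∉ I, c ≤ |lam i - l|) :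
    ⟪w, (Submodule.orthogonalProjectionOnto ((Submodule.span ℝ (v '' I)).topologicalClosure) w : H)⟫ ≤ ‖w‖ ^ 2 ∧
    ‖w‖ ^ 2 - ε ^ 2 / c ^ 2
      ≤ ⟪w, (Submodule.orthogonalProjectionOnto ((Submodule.span ℝ (v '' I)).topologicalClosure) w : H)⟫ := by
  set S := (Submodule.span ℝ (v '' I)).topologicalClosure with hS
  set p : H := (Submodule.orthogonalProjectionOnto S w : H) with hp
  set u : H := w - p with hu
  have hpS : p ∈ S := (Submodule.orthogonalProjectionOnto S w).2
  have huS : u ∈ Sᗮ := S.sub_starProjection_mem_orthogonal w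
  have hup : ⟪u, p⟫ = 0 := (Submodule.mem_orthogonal' S u).mp huS p hpS
  -- Hilbert basis
  let b : HilbertBasis ℕ ℝ H := HilbertBasis.mk hv htot
  have hbv : ∀ i, b i = v i := fun i => by rw [HilbertBasis.coe_mk]
  -- Parseval for a vector x : ‖x‖² = ∑' i, ⟪v i, x⟫^2
  have parseval : ∀ x : H, HasSum (fun i => ⟪v i, x⟫ ^ 2) (‖x‖ ^ 2) := by
    intro x
    have h := b.hasSum_inner_mul_inner x x
    rw [real_inner_self_eq_norm_sq] at h
    convert h using 2 with i
    swap
    rw [hbv, sq, real_inner_comm]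
    rfl
  -- inner of v i with u for i ∈ I is 0
  have hinI : ∀ i ∈ I, ⟪v i, u⟫ = 0 := by
    intro i hi
    have hviS : v i ∈ S :=
      Submodule.le_topologicalClosure _ (Submodule.subset_span ⟨i, hi, rfl⟩)
    exact (Submodule.mem_orthogonal S u).mp huS _ hviS
  -- for i ∉ I, ⟪v i, p⟫ = 0, so ⟪v i, u⟫ = ⟪v i, w⟫
  have hnotI : ∀ i ∉ I, ⟪v i, u⟫ = ⟪v i, w⟫ := by
    intro i hi
    have hvi : S ≤ (ℝ ∙ v i)ᗮ := by
      refine Submodule.topologicalClosure_minimal _ ?_ (Submodule.isClosed_orthogonal _)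
      rw [Submodule.span_le]
      rintro _ ⟨j, hj, rfl⟩
      rw [SetLike.mem_coe, Submodule.mem_orthogonal_singleton_iff_inner_right]
      exact hv.2 (fun h => hi (h ▸ hj))
    have hvip : ⟪v i, p⟫ = 0 :=
      Submodule.mem_orthogonal_singleton_iff_inner_right.mp (hvi hpS)
    rw [hu, inner_sub_right, hvip, sub_zero]
  -- coefficient identity for K w - l • w
  have hcoef : ∀ i, ⟪v i, K w - l • w⟫ = (lam i - l) * ⟪v i, w⟫ := by
    intro i
    rw [inner_sub_right, inner_smul_right, ← hsa, heig, inner_smul_left]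
    ring_nf
    simp [RCLike.star_def]
    ring
  -- termwise inequality
  have hterm : ∀ i, c ^ 2 * ⟪v i, u⟫ ^ 2 ≤ ⟪v i, K w - l • w⟫ ^ 2 := by
    intro i
    by_cases hi : i ∈ I
    · rw [hinI i hi]
      simpa using sq_nonneg ⟪v i, K w - l • w⟫
    · rw [hnotI i hi, hcoef i, mul_pow]
      apply mul_le_mul_of_nonneg_right _ (sq_nonneg _)
      calc c ^ 2 ≤ |lam i - l| ^ 2 := by
            apply pow_le_pow_left₀ hc.le (hsep i hi)
        _ = (lam i - l) ^ 2 := sq_abs _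
  -- sum the inequality
  have hsum1 : HasSum (fun i => c ^ 2 * ⟪v i, u⟫ ^ 2) (c ^ 2 * ‖u‖ ^ 2) :=
    (parseval u).mul_left _
  have hsum2 : HasSum (fun i => ⟪v i, K w - l • w⟫ ^ 2) (‖K w - l • w‖ ^ 2) :=
    parseval (K w - l • w)
  have hmain : c ^ 2 * ‖u‖ ^ 2 ≤ ε ^ 2 := by
    calc c ^ 2 * ‖u‖ ^ 2 ≤ ‖K w - l • w‖ ^ 2 :=
          hasSum_le hterm hsum1 hsum2
      _ ≤ ε ^ 2 := pow_le_pow_left₀ (norm_nonneg _) hKw 2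
  have hu2 : ‖u‖ ^ 2 ≤ ε ^ 2 / c ^ 2 := by
    rw [le_div_iff₀ (by positivity)]
    linarith [hmain]
  -- Pythagoras
  have hpyth : ‖w‖ ^ 2 = ‖u‖ ^ 2 + ‖p‖ ^ 2 := by
    have : w = u + p := by rw [hu]; abel
    rw [this, norm_add_sq_real, hup]
    ring
  have hwp : ⟪w, p⟫ = ‖p‖ ^ 2 := by
    have : w = u + p := by rw [hu]; abel
    rw [this, inner_add_left, hup, real_inner_self_eq_norm_sq, zero_add]
  constructor
  · rw [hwp, hpyth]; nlinarith [sq_nonneg ‖u‖]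
  · rw [hwp, hpyth]; linarith [hu2]
end

section
/- Let g : [0,1] → ℝ be continuously differentiable, let o, m_o ∈ ℕ with o, m_o ≥ 1 and m := o·m_o, and let 1 ≤ i ≤ m_o. Then, with ξ_{l,m} := l/(m+1) and ξ_{i,m_o} := i/(m_o+1), | (1/o)·Σ_{j=1}^o g(ξ_{(i−1)o+j, m}) − g(ξ_{i,m_o}) | ≤ √(o/(m+1)) · √( ∫_{(i−1)o/(m+1)}^{i·o/(m+1)} g'(t)² dt ). -/
open Real MeasureTheory

private lemma cs_aux {f : ℝ → ℝ} {a b : ℝ} (hab : a ≤ b)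
    (hf : ContinuousOn f (Set.Icc a b)) :
    ∫ t in a..b, |f t| ≤ Real.sqrt (b - a) * Real.sqrt (∫ t in a..b, f t ^ 2) := by
  set μ := volume.restrict (Set.Ioc a b) with hμ
  haveI : IsFiniteMeasure μ := by
    constructor
    rw [hμ, Measure.restrict_apply_univ]
    exact measure_Ioc_lt_top
  have hmeas : AEStronglyMeasurable f μ :=
    (hf.mono Set.Ioc_subset_Icc_self).aestronglyMeasurable measurableSet_Ioc
  obtain ⟨C, hC⟩ := isCompact_Icc.exists_bound_of_continuousOn hf
  have hmem : MemLp f (ENNReal.ofReal 2) μ := by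
    apply MemLp.of_bound hmeas C
    rw [hμ, ae_restrict_iff' measurableSet_Ioc]
    exact Filter.Eventually.of_forall fun x hx => hC x (Set.Ioc_subset_Icc_self hx)
  have hmemabs : MemLp (fun t => |f t|) (ENNReal.ofReal 2) μ := by
    simpa [Real.norm_eq_abs] using hmem.norm
  have hmem1 : MemLp (fun _ : ℝ => (1:ℝ)) (ENNReal.ofReal 2) μ := memLp_const 1
  have hpq : Real.HolderConjugate 2 2 := Real.HolderConjugate.two_two
  have h := integral_mul_le_Lp_mul_Lq_of_nonneg hpq
    (f := fun t => |f t|) (g := fun _ => (1:ℝ))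
    (Filter.Eventually.of_forall fun x => abs_nonneg _)
    (Filter.Eventually.of_forall fun _ => zero_le_one) hmemabs hmem1
  simp only [mul_one, one_pow] at h
  have h1 : ∫ _ : ℝ, (1:ℝ) ^ (2:ℝ) ∂μ = b - a := by
    simp [hab, hμ, Real.volume_Ioc, ENNReal.toReal_ofReal (by linarith : (0:ℝ) ≤ b - a)]
  have h2 : ∀ x : ℝ, |f x| ^ (2:ℝ) = f x ^ 2 := by
    intro x
    rw [show (2:ℝ) = ((2:ℕ):ℝ) by norm_num, Real.rpow_natCast, sq_abs]
  simp only [h1, h2] at h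
  rw [intervalIntegral.integral_of_le hab, intervalIntegral.integral_of_le hab]
  calc ∫ t in Set.Ioc a b, |f t| = ∫ t, |f t| ∂μ := rfl
    _ ≤ (∫ t, f t ^ 2 ∂μ) ^ (1/(2:ℝ)) * (b - a) ^ (1/(2:ℝ)) := h
    _ = Real.sqrt (b - a) * Real.sqrt (∫ t in Set.Ioc a b, f t ^ 2) := by
        rw [← Real.sqrt_eq_rpow, ← Real.sqrt_eq_rpow, mul_comm]

/-- Let `g : [0,1] → ℝ` be continuously differentiable (with derivative
`g'` on `[0,1]`), let `o, m_o ≥ 1`, `m = o·m_o`, and `1 ≤ i ≤ m_o`.  Then, with the uniform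
grids `ξ_{l,m} = l/(m+1)` and `ξ_{i,m_o} = i/(m_o+1)`:
`|(1/o) Σ_{j=1}^o g(ξ_{(i−1)o+j,m}) − g(ξ_{i,m_o})|
   ≤ √(o/(m+1)) · √(∫_{(i−1)o/(m+1)}^{io/(m+1)} g'(t)² dt)`. -/
theorem stmt_17 (g g' : ℝ → ℝ)
    (hg' : ∀ x ∈ Set.Icc (0:ℝ) 1, HasDerivWithinAt g (g' x) (Set.Icc 0 1) x)
    (hcont : ContinuousOn g' (Set.Icc 0 1))
    (o mo : ℕ) (ho : 1 ≤ o) (hmo : 1 ≤ mo) (m : ℕ) (hm : m = o * mo)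
    (i : ℕ) (hi1 : 1 ≤ i) (himo : i ≤ mo) :
    |(1 / (o : ℝ)) * (∑ j ∈ Finset.Icc 1 o,
        g ((((i - 1) * o + j : ℕ) : ℝ) / ((m : ℝ) + 1)))
      - g ((i : ℝ) / ((mo : ℝ) + 1))|
      ≤ Real.sqrt ((o : ℝ) / ((m : ℝ) + 1)) *
        Real.sqrt (∫ t in ((((i : ℝ) - 1) * o) / ((m : ℝ) + 1))..(((i : ℝ) * o) / ((m : ℝ) + 1)),
          g' t ^ 2) := by
  have hoR : (1:ℝ) ≤ (o:ℝ) := by exact_mod_cast ho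
  have hmoR : (1:ℝ) ≤ (mo:ℝ) := by exact_mod_cast hmo
  have hiR : (1:ℝ) ≤ (i:ℝ) := by exact_mod_cast hi1
  have himoR : (i:ℝ) ≤ (mo:ℝ) := by exact_mod_cast himo
  have hmR : (m:ℝ) = (o:ℝ) * (mo:ℝ) := by rw [hm]; push_cast; ring
  have hm1 : (0:ℝ) < (m:ℝ) + 1 := by positivity
  set a : ℝ := (((i:ℝ) - 1) * o) / ((m:ℝ) + 1) with ha_def
  set b : ℝ := ((i:ℝ) * o) / ((m:ℝ) + 1) with hb_def
  have hab : a ≤ b := by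
    rw [ha_def, hb_def]
    gcongr
    linarith
  have ha0 : 0 ≤ a := by
    apply div_nonneg _ hm1.le
    nlinarith
  have hb1 : b ≤ 1 := by
    rw [hb_def, div_le_one hm1]
    nlinarith
  have hsub : Set.Icc a b ⊆ Set.Icc (0:ℝ) 1 := Set.Icc_subset_Icc ha0 hb1
  have hgc : ContinuousOn g (Set.Icc (0:ℝ) 1) := fun x hx => (hg' x hx).continuousWithinAt
  -- FTC on subintervals of [a,b]
  have ftc : ∀ u v : ℝ, u ∈ Set.Icc a b → v ∈ Set.Icc a b → u ≤ v →
      ∫ t in u..v, g' t = g v - g u := by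
    intro u v hu hv huv
    have hsub' : Set.Icc u v ⊆ Set.Icc (0:ℝ) 1 :=
      fun t ht => hsub ⟨le_trans hu.1 ht.1, le_trans ht.2 hv.2⟩
    apply intervalIntegral.integral_eq_sub_of_hasDeriv_right_of_le huv
      (hgc.mono hsub')
    · intro t ht
      have ht01 : t ∈ Set.Icc (0:ℝ) 1 := hsub' ⟨ht.1.le, ht.2.le⟩
      have htlt : t < 1 := lt_of_lt_of_le ht.2 (hsub' ⟨huv, le_refl v⟩).2
      exact (hg' t ht01).mono_of_mem_nhdsWithin (Icc_mem_nhdsGT_of_mem ⟨ht01.1, htlt⟩)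
    · have : ContinuousOn g' (Set.uIcc u v) := by
        rw [Set.uIcc_of_le huv]; exact hcont.mono hsub'
      exact this.intervalIntegrable
  have habs_int : IntervalIntegrable (fun t => |g' t|) volume a b := by
    have : ContinuousOn (fun t => |g' t|) (Set.uIcc a b) := by
      rw [Set.uIcc_of_le hab]; exact ((hcont.mono hsub).abs)
    exact this.intervalIntegrable
  set B : ℝ := Real.sqrt (b - a) * Real.sqrt (∫ t in a..b, g' t ^ 2) with hB_def
  have key : ∀ x ∈ Set.Icc a b, ∀ y ∈ Set.Icc a b, |g x - g y| ≤ B := by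
    have main : ∀ x y : ℝ, x ∈ Set.Icc a b → y ∈ Set.Icc a b → y ≤ x → |g x - g y| ≤ B := by
      intro x y hx hy hyx
      rw [← ftc y x hy hx hyx]
      calc |∫ t in y..x, g' t| ≤ ∫ t in y..x, |g' t| :=
            intervalIntegral.abs_integral_le_integral_abs hyx
        _ ≤ ∫ t in a..b, |g' t| := by
            apply intervalIntegral.integral_mono_interval hy.1 hyx hx.2
            · exact Filter.Eventually.of_forall fun t => abs_nonneg _
            · exact habs_int
        _ ≤ B := cs_aux hab (hcont.mono hsub)
    intro x hx y hy
    rcases le_total y x with h | h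
    · exact main x y hx hy h
    · rw [abs_sub_comm]; exact main y x hy hx h
  -- the coarse grid point lies in [a,b]
  set y : ℝ := (i:ℝ) / ((mo:ℝ) + 1) with hy_def
  have hmo1 : (0:ℝ) < (mo:ℝ) + 1 := by positivity
  have hy : y ∈ Set.Icc a b := by
    constructor
    · rw [ha_def, hy_def, div_le_div_iff₀ hm1 hmo1]
      nlinarith [mul_le_mul_of_nonneg_right himoR (by positivity : (0:ℝ) ≤ (o:ℝ))]
    · rw [hy_def, hb_def, div_le_div_iff₀ hmo1 hm1]
      nlinarith [mul_le_mul_of_nonneg_left hoR (by positivity : (0:ℝ) ≤ (i:ℝ))]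
  -- the fine grid points lie in [a,b]
  have hx : ∀ j ∈ Finset.Icc 1 o,
      ((((i - 1) * o + j : ℕ) : ℝ) / ((m:ℝ) + 1)) ∈ Set.Icc a b := by
    intro j hj
    obtain ⟨hj1, hj2⟩ := Finset.mem_Icc.mp hj
    have hj1R : (1:ℝ) ≤ (j:ℝ) := by exact_mod_cast hj1
    have hj2R : (j:ℝ) ≤ (o:ℝ) := by exact_mod_cast hj2
    have hcast : (((i - 1) * o + j : ℕ) : ℝ) = ((i:ℝ) - 1) * (o:ℝ) + (j:ℝ) := by
      rw [Nat.cast_add, Nat.cast_mul, Nat.cast_sub hi1, Nat.cast_one]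
    rw [hcast]
    constructor
    · rw [ha_def]; gcongr; linarith
    · rw [hb_def]
      gcongr
      nlinarith
  have hoR0 : (0:ℝ) < (o:ℝ) := by linarith
  have hcard : (Finset.Icc 1 o).card = o := by rw [Nat.card_Icc]; omega
  have hsum_eq : ∑ j ∈ Finset.Icc 1 o, (g ((((i - 1) * o + j : ℕ) : ℝ) / ((m:ℝ) + 1)) - g y)
      = (∑ j ∈ Finset.Icc 1 o, g ((((i - 1) * o + j : ℕ) : ℝ) / ((m:ℝ) + 1))) - (o:ℝ) * g y := by
    rw [Finset.sum_sub_distrib, Finset.sum_const, hcard, nsmul_eq_mul]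
  have hEq : (1 / (o:ℝ)) * (∑ j ∈ Finset.Icc 1 o,
        g ((((i - 1) * o + j : ℕ) : ℝ) / ((m:ℝ) + 1))) - g y
      = (1 / (o:ℝ)) * ∑ j ∈ Finset.Icc 1 o,
        (g ((((i - 1) * o + j : ℕ) : ℝ) / ((m:ℝ) + 1)) - g y) := by
    rw [hsum_eq]; field_simp
  have hba : b - a = (o:ℝ) / ((m:ℝ) + 1) := by
    rw [ha_def, hb_def]; ring
  have hfinal : |(1 / (o:ℝ)) * (∑ j ∈ Finset.Icc 1 o,
        g ((((i - 1) * o + j : ℕ) : ℝ) / ((m:ℝ) + 1))) - g y| ≤ B := by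
    rw [hEq, abs_mul, abs_of_nonneg (by positivity : (0:ℝ) ≤ 1 / (o:ℝ))]
    calc (1 / (o:ℝ)) * |∑ j ∈ Finset.Icc 1 o,
          (g ((((i - 1) * o + j : ℕ) : ℝ) / ((m:ℝ) + 1)) - g y)|
        ≤ (1 / (o:ℝ)) * ∑ j ∈ Finset.Icc 1 o,
          |g ((((i - 1) * o + j : ℕ) : ℝ) / ((m:ℝ) + 1)) - g y| := by
          gcongr
          exact Finset.abs_sum_le_sum_abs _ _
      _ ≤ (1 / (o:ℝ)) * ∑ _j ∈ Finset.Icc 1 o, B := by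
          gcongr with j hj
          exact key _ (hx j hj) y hy
      _ = (1 / (o:ℝ)) * ((o:ℝ) * B) := by
          rw [Finset.sum_const, hcard, nsmul_eq_mul]
      _ = B := by field_simp
  calc |(1 / (o:ℝ)) * (∑ j ∈ Finset.Icc 1 o,
        g ((((i - 1) * o + j : ℕ) : ℝ) / ((m:ℝ) + 1))) - g y| ≤ B := hfinal
    _ = Real.sqrt ((o:ℝ) / ((m:ℝ) + 1)) * Real.sqrt (∫ t in a..b, g' t ^ 2) := by
        rw [hB_def, hba]
end
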